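/- In the transvection group example, the Gerstenhaber square bracket of the 2-cocycle λ with itself vanishes at the cochain level: [λ, λ] = λ ∘_X λ − λ ∘_X λ computed via the twisted product resolution is 0; in particular λ ∘_X λ = 0 on X₃. -/

import Mathlib

open scoped TensorProduct
open MulOpposite

noncomputable section

universe u

variable (p : ℕ) [Fact p.Prime] (k : Type u) [Field k] [CharP k p]

/-- The submodule of middle-linearity relations defining the tensor product over `R`
of a right `R`-module `M` and a left `R`-module `N`. -/
def midRel (R : Type u) [Ring R] (M N : Type u)
    [AddCommGroup M] [Module k M] [Module Rᵐᵒᵖ M]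
    [AddCommGroup N] [Module k N] [Module R N] : Submodule k (M ⊗[k] N) :=
  Submodule.span k
    {z | ∃ (r : R) (m : M) (n : N), z = (op r • m) ⊗ₜ[k] n - m ⊗ₜ[k] (r • n)}

/-- The tensor product `M ⊗_R N` over `R`, as a quotient of `M ⊗[k] N`. -/
abbrev OverR (R : Type u) [Ring R] (M N : Type u)
    [AddCommGroup M] [Module k M] [Module Rᵐᵒᵖ M]
    [AddCommGroup N] [Module k N] [Module R N] : Type u :=
  (M ⊗[k] N) ⧸ midRel k R M N

/-- The image of a pure tensor in `M ⊗_R N`. -/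
abbrev omk (R : Type u) [Ring R] {M N : Type u}
    [AddCommGroup M] [Module k M] [Module Rᵐᵒᵖ M]
    [AddCommGroup N] [Module k N] [Module R N] (m : M) (n : N) :
    OverR k R M N :=
  Submodule.Quotient.mk (m ⊗ₜ[k] n)

/-- The middle-linearity relations for the triple tensor product `M ⊗_R M ⊗_R M`. -/
def midRel3 (R : Type u) [Ring R] (M : Type u)
    [AddCommGroup M] [Module k M] [Module R M] [Module Rᵐᵒᵖ M] :
    Submodule k (M ⊗[k] (M ⊗[k] M)) :=
  Submodule.span k
    ({z | ∃ (r : R) (m n q : M),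
        z = (op r • m) ⊗ₜ[k] (n ⊗ₜ[k] q) - m ⊗ₜ[k] ((r • n) ⊗ₜ[k] q)} ∪
     {z | ∃ (r : R) (m n q : M),
        z = m ⊗ₜ[k] ((op r • n) ⊗ₜ[k] q) - m ⊗ₜ[k] (n ⊗ₜ[k] (r • q))})

/-- The triple tensor product `M ⊗_R M ⊗_R M` over `R`. -/
abbrev Over3 (R : Type u) [Ring R] (M : Type u)
    [AddCommGroup M] [Module k M] [Module R M] [Module Rᵐᵒᵖ M] : Type u :=
  (M ⊗[k] (M ⊗[k] M)) ⧸ midRel3 k R M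

/-- The image of a pure tensor in `M ⊗_R M ⊗_R M`. -/
abbrev omk3 (R : Type u) [Ring R] {M : Type u}
    [AddCommGroup M] [Module k M] [Module R M] [Module Rᵐᵒᵖ M] (m n q : M) :
    Over3 k R M :=
  Submodule.Quotient.mk (m ⊗ₜ[k] (n ⊗ₜ[k] q))

/-- The cyclic group `G = ℤ/pℤ`, written multiplicatively, generated by the
transvection `g = (1 1 / 0 1)` acting on `V = k²`. -/
abbrev Gp : Type := Multiplicative (ZMod p)

/-- The generator `g` of `G ≅ ℤ/pℤ`. -/
def gg : Gp p := Multiplicative.ofAdd (1 : ZMod p)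

/-- `S = S(V) ≅ k[v,w]`, the symmetric algebra on `V = k²`. -/
abbrev SV : Type u := MvPolynomial (Fin 2) k

/-- The basis vector `v` of `V`, as an element of `S(V)`. -/
def vv : SV k := MvPolynomial.X 0

/-- The basis vector `w` of `V`, as an element of `S(V)`. -/
def ww : SV k := MvPolynomial.X 1

variable [MulSemiringAction (Gp p) (SV k)] [SMulCommClass (Gp p) k (SV k)]

variable (C : Type u) [AddCommGroup C] [Module k C]
  [Module (MonoidAlgebra k (Gp p)) C] [Module (MonoidAlgebra k (Gp p))ᵐᵒᵖ C]
  [IsScalarTower k (MonoidAlgebra k (Gp p)) C]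
  [IsScalarTower k (MonoidAlgebra k (Gp p))ᵐᵒᵖ C]
  [SMulCommClass (MonoidAlgebra k (Gp p)) (MonoidAlgebra k (Gp p))ᵐᵒᵖ C]
  [SMulCommClass (MonoidAlgebra k (Gp p)) k C]
  [SMulCommClass (MonoidAlgebra k (Gp p))ᵐᵒᵖ k C]

/-- The reduced bar resolution `C` of `kG`, `C_n = kG ⊗ (kG/k·1)^{⊗n} ⊗ kG`, presented by
its spanning generators: `gen n a` records `a 0 ⊗ (a 1)⁻ ⊗ ⋯ ⊗ (a n)⁻ ⊗ a (n+1)` for group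
elements `a t` (only the entries `a 0, …, a (n+1)` are relevant, and a generator vanishes
whenever one of its middle entries equals `1`).  The sign operator `ε_C` is included. -/
structure RedBarC : Type u where
  gr : ℕ → Submodule k C
  internal : DirectSum.IsInternal gr
  gen : ℕ → (ℕ → Gp p) → C
  gen_gr : ∀ (n : ℕ) (a : ℕ → Gp p), gen n a ∈ gr n
  gen_span : ∀ n : ℕ, gr n ≤ Submodule.span k {x | ∃ a : ℕ → Gp p, x = gen n a}
  gen_congr : ∀ (n : ℕ) (a b : ℕ → Gp p), (∀ t ≤ n + 1, a t = b t) → gen n a = gen n b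
  reduced : ∀ (n : ℕ) (a : ℕ → Gp p) (t : ℕ), 1 ≤ t → t ≤ n → a t = 1 → gen n a = 0
  smul_gen : ∀ (g₀ : Gp p) (n : ℕ) (a : ℕ → Gp p),
    (MonoidAlgebra.single g₀ (1 : k)) • gen n a =
      gen n (Function.update a 0 (g₀ * a 0))
  smul_op_gen : ∀ (g₁ : Gp p) (n : ℕ) (a : ℕ → Gp p),
    (op (MonoidAlgebra.single g₁ (1 : k))) • gen n a =
      gen n (Function.update a (n + 1) (a (n + 1) * g₁))
  d : C →ₗ[k] C
  d_gen : ∀ (n : ℕ) (a : ℕ → Gp p),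
    d (gen (n + 1) a) = ∑ i ∈ Finset.range (n + 2), (-1 : k) ^ i •
      gen n (fun t => if t < i then a t else if t = i then a i * a (i + 1) else a (t + 1))
  d_zero : ∀ a : ℕ → Gp p, d (gen 0 a) = 0
  aug : C →ₗ[k] MonoidAlgebra k (Gp p)
  aug_gen : ∀ a : ℕ → Gp p, aug (gen 0 a) = MonoidAlgebra.single (a 0 * a 1) (1 : k)
  aug_gr : ∀ (n : ℕ) (x : C), x ∈ gr (n + 1) → aug x = 0
  eps : C →ₗ[k] C
  eps_gen : ∀ (n : ℕ) (a : ℕ → Gp p), eps (gen n a) = (-1 : k) ^ n • gen n a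

variable (D : Type u) [AddCommGroup D] [Module k D]
  [Module (SV k) D] [Module (SV k)ᵐᵒᵖ D]
  [IsScalarTower k (SV k) D] [IsScalarTower k (SV k)ᵐᵒᵖ D]
  [SMulCommClass (SV k) (SV k)ᵐᵒᵖ D] [SMulCommClass (SV k) k D]
  [SMulCommClass (SV k)ᵐᵒᵖ k D]
  [DistribMulAction (Gp p) D] [SMulCommClass (Gp p) k D]

/-- The Koszul resolution `D` of `S = S(V)`, `D_j = S ⊗ Λ^j V ⊗ S` for `V = k²`,
presented by its generators: `gen0 s s' = s ⊗ s'`, `gen1v s s' = s ⊗ v ⊗ s'`,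
`gen1w s s' = s ⊗ w ⊗ s'` and `gen2 s s' = s ⊗ v∧w ⊗ s'`, with the Koszul differential,
augmentation given by multiplication, the evident `S`-bimodule structure, and the
`G`-action induced by `ᵍv = v`, `ᵍw = v + w`. -/
structure KoszulD : Type u where
  gr : ℕ → Submodule k D
  internal : DirectSum.IsInternal gr
  gr_top : ∀ n : ℕ, gr (n + 3) = ⊥
  gen0 : SV k →ₗ[k] SV k →ₗ[k] D
  gen1v : SV k →ₗ[k] SV k →ₗ[k] D
  gen1w : SV k →ₗ[k] SV k →ₗ[k] D
  gen2 : SV k →ₗ[k] SV k →ₗ[k] D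
  gen0_gr : ∀ s s' : SV k, gen0 s s' ∈ gr 0
  gen1v_gr : ∀ s s' : SV k, gen1v s s' ∈ gr 1
  gen1w_gr : ∀ s s' : SV k, gen1w s s' ∈ gr 1
  gen2_gr : ∀ s s' : SV k, gen2 s s' ∈ gr 2
  span0 : gr 0 ≤ Submodule.span k {x | ∃ s s' : SV k, x = gen0 s s'}
  span1 : gr 1 ≤ Submodule.span k
    {x | (∃ s s' : SV k, x = gen1v s s') ∨ (∃ s s' : SV k, x = gen1w s s')}
  span2 : gr 2 ≤ Submodule.span k {x | ∃ s s' : SV k, x = gen2 s s'}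
  smul_gen0 : ∀ s₀ s s' : SV k, s₀ • gen0 s s' = gen0 (s₀ * s) s'
  smul_gen1v : ∀ s₀ s s' : SV k, s₀ • gen1v s s' = gen1v (s₀ * s) s'
  smul_gen1w : ∀ s₀ s s' : SV k, s₀ • gen1w s s' = gen1w (s₀ * s) s'
  smul_gen2 : ∀ s₀ s s' : SV k, s₀ • gen2 s s' = gen2 (s₀ * s) s'
  smul_op_gen0 : ∀ s₁ s s' : SV k, op s₁ • gen0 s s' = gen0 s (s' * s₁)
  smul_op_gen1v : ∀ s₁ s s' : SV k, op s₁ • gen1v s s' = gen1v s (s' * s₁)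
  smul_op_gen1w : ∀ s₁ s s' : SV k, op s₁ • gen1w s s' = gen1w s (s' * s₁)
  smul_op_gen2 : ∀ s₁ s s' : SV k, op s₁ • gen2 s s' = gen2 s (s' * s₁)
  gact_gen0 : ∀ s s' : SV k,
    gg p • gen0 s s' = gen0 (gg p • s) (gg p • s')
  gact_gen1v : ∀ s s' : SV k,
    gg p • gen1v s s' = gen1v (gg p • s) (gg p • s')
  gact_gen1w : ∀ s s' : SV k,
    gg p • gen1w s s' = gen1v (gg p • s) (gg p • s') + gen1w (gg p • s) (gg p • s')
  gact_gen2 : ∀ s s' : SV k,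
    gg p • gen2 s s' = gen2 (gg p • s) (gg p • s')
  d : D →ₗ[k] D
  d_gen0 : ∀ s s' : SV k, d (gen0 s s') = 0
  d_gen1v : ∀ s s' : SV k, d (gen1v s s') = gen0 (s * vv k) s' - gen0 s (vv k * s')
  d_gen1w : ∀ s s' : SV k, d (gen1w s s') = gen0 (s * ww k) s' - gen0 s (ww k * s')
  d_gen2 : ∀ s s' : SV k, d (gen2 s s') =
    gen1w (s * vv k) s' - gen1w s (vv k * s') - gen1v (s * ww k) s' + gen1v s (ww k * s')
  aug : D →ₗ[k] SV k
  aug_gen0 : ∀ s s' : SV k, aug (gen0 s s') = s * s'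
  aug_gr : ∀ (n : ℕ) (x : D), x ∈ gr (n + 1) → aug x = 0

variable (A : Type u) [Ring A] [Algebra k A]

/-- The `k`-linear map `S ⊗ kG → A` sending `s ⊗ g ↦ ιS(s) ιG(g)`; requiring it to be
bijective expresses that `A = S(V) ⋊ G` is the skew group algebra. -/
def skewAssembly (ιS : SV k →ₐ[k] A) (ιG : Gp p →* A) : (Gp p →₀ SV k) →ₗ[k] A :=
  Finsupp.lsum k fun g => (LinearMap.mulRight k (ιG g)) ∘ₗ ιS.toLinearMap

/-- The homogeneous component of total homological degree `n` of `X = C ⊗ D`. -/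
def Xdeg (grC : ℕ → Submodule k C) (grD : ℕ → Submodule k D) (n : ℕ) :
    Submodule k (C ⊗[k] D) :=
  ⨆ (q : ℕ × ℕ) (_ : q.1 + q.2 = n),
    Submodule.span k
      (Set.image2 (fun (c : C) (d : D) => c ⊗ₜ[k] d) (grC q.1 : Set C) (grD q.2 : Set D))

variable {p k C D A}


namespace BLL
set_option linter.unusedSectionVars false

variable (p k C D A)
variable [Module A (C ⊗[k] D)] [Module Aᵐᵒᵖ (C ⊗[k] D)]
  [IsScalarTower k A (C ⊗[k] D)] [IsScalarTower k Aᵐᵒᵖ (C ⊗[k] D)]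
  [SMulCommClass A Aᵐᵒᵖ (C ⊗[k] D)]

/-- Bundled context for the bracket computation. -/
structure Ctx where
  RC : RedBarC p k C
  RD : KoszulD p k D
  hgv : gg p • vv k = vv k
  ιS : SV k →ₐ[k] A
  ιG : Gp p →* A
  hcomm : ∀ (g : Gp p) (s : SV k), ιG g * ιS s = ιS (g • s) * ιG g
  hactL : ∀ (s' : SV k) (g' : Gp p) (n : ℕ) (a : ℕ → Gp p) (d : D),
      (ιS s' * ιG g') • (RC.gen n a ⊗ₜ[k] d) =
        ((MonoidAlgebra.single g' (1 : k)) • RC.gen n a) ⊗ₜ[k]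
          ((((g' * ∏ t ∈ Finset.range (n + 2), a t)⁻¹ : Gp p) • s') • d)
  hactR : ∀ (s : SV k) (g : Gp p) (c : C) (d : D),
      (op (ιS s * ιG g)) • (c ⊗ₜ[k] d) =
        (op (MonoidAlgebra.single g (1 : k)) • c) ⊗ₜ[k] ((g⁻¹ : Gp p) • (op s • d))
  lam : C ⊗[k] D →ₗ[k] A
  hlamL : ∀ (a : A) (x : C ⊗[k] D), lam (a • x) = a * lam x
  hlamR : ∀ (c : Aᵐᵒᵖ) (x : C ⊗[k] D), lam (c • x) = lam x * c.unop
  hlam_supp : ∀ i j : ℕ, ¬(i = 1 ∧ j = 1) →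
      ∀ c ∈ RC.gr i, ∀ d ∈ RD.gr j, lam (c ⊗ₜ[k] d) = 0
  hlam_v : ∀ i : ℕ, i ≤ p - 1 →
      lam (RC.gen 1 (fun t => if t = 1 then (gg p) ^ i else 1) ⊗ₜ[k] RD.gen1v 1 1) = 0
  hlam_w : ∀ i : ℕ, i ≤ p - 1 →
      lam (RC.gen 1 (fun t => if t = 1 then (gg p) ^ i else 1) ⊗ₜ[k] RD.gen1w 1 1) =
        (i : k) • ιG ((gg p) ^ (i - 1))
  dTDD : OverR k (SV k) D D →ₗ[k] OverR k (SV k) D D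
  hdTDD : ∀ (j : ℕ) (d d' : D), d ∈ RD.gr j →
      dTDD (omk k (SV k) d d') =
        omk k (SV k) (RD.d d) d' + (-1 : k) ^ j • omk k (SV k) d (RD.d d')
  rmuC : OverR k (MonoidAlgebra k (Gp p)) C C →ₗ[k] C
  hrmuC : ∀ c c' : C, rmuC (omk k (MonoidAlgebra k (Gp p)) c c') = op (RC.aug c') • c
  lmuD : OverR k (SV k) D D →ₗ[k] D
  hlmuD : ∀ d d' : D, lmuD (omk k (SV k) d d') = RD.aug d • d'
  rmuD : OverR k (SV k) D D →ₗ[k] D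
  hrmuD : ∀ d d' : D, rmuD (omk k (SV k) d d') = op (RD.aug d') • d
  ΔC : C →ₗ[k] OverR k (MonoidAlgebra k (Gp p)) C C
  hΔC : ∀ (n : ℕ) (a : ℕ → Gp p),
      ΔC (RC.gen n a) = ∑ j ∈ Finset.range (n + 1),
        omk k (MonoidAlgebra k (Gp p)) (RC.gen j (fun t => if t ≤ j then a t else 1))
          (RC.gen (n - j) (fun t => if t = 0 then 1 else a (t + j)))
  ΔD : D →ₗ[k] OverR k (SV k) D D
  hΔD0 : ∀ s s' : SV k, ΔD (RD.gen0 s s') =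
      omk k (SV k) (RD.gen0 s 1) (RD.gen0 1 s')
  hΔD1v : ∀ s s' : SV k, ΔD (RD.gen1v s s') =
      omk k (SV k) (RD.gen0 s 1) (RD.gen1v 1 s') +
      omk k (SV k) (RD.gen1v s 1) (RD.gen0 1 s')
  hΔD1w : ∀ s s' : SV k, ΔD (RD.gen1w s s') =
      omk k (SV k) (RD.gen0 s 1) (RD.gen1w 1 s') +
      omk k (SV k) (RD.gen1w s 1) (RD.gen0 1 s')
  hΔD2 : ∀ s s' : SV k, ΔD (RD.gen2 s s') =
      omk k (SV k) (RD.gen0 s 1) (RD.gen2 1 s') +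
      omk k (SV k) (RD.gen1v s 1) (RD.gen1w 1 s') -
      omk k (SV k) (RD.gen1w s 1) (RD.gen1v 1 s') +
      omk k (SV k) (RD.gen2 s 1) (RD.gen0 1 s')
  Θ : (OverR k (MonoidAlgebra k (Gp p)) C C) ⊗[k] (OverR k (SV k) D D) →ₗ[k]
      OverR k A (C ⊗[k] D) (C ⊗[k] D)
  hΘ : ∀ (i i' j : ℕ) (x x' : ℕ → Gp p) (d d' : D), d ∈ RD.gr j →
      Θ ((omk k (MonoidAlgebra k (Gp p)) (RC.gen i x) (RC.gen i' x')) ⊗ₜ[k]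
          (omk k (SV k) d d')) =
        (-1 : k) ^ (i' * j) •
          omk k A (RC.gen i x ⊗ₜ[k] ((∏ t ∈ Finset.range (i' + 2), x' t) • d))
            (RC.gen i' x' ⊗ₜ[k] d')
  tauInvQ : OverR k A (C ⊗[k] D) (C ⊗[k] D) →ₗ[k]
      (OverR k (MonoidAlgebra k (Gp p)) C C) ⊗[k] (OverR k (SV k) D D)
  htauInvQ : ∀ (i i' j : ℕ) (x x' : ℕ → Gp p) (d d' : D), d ∈ RD.gr j →
      tauInvQ (omk k A (RC.gen i x ⊗ₜ[k] d) (RC.gen i' x' ⊗ₜ[k] d')) =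
        (-1 : k) ^ (i' * j) •
          ((omk k (MonoidAlgebra k (Gp p)) (RC.gen i x) (RC.gen i' x')) ⊗ₜ[k]
            (omk k (SV k) (((∏ t ∈ Finset.range (i' + 2), x' t)⁻¹ : Gp p) • d) d'))
  φC : OverR k (MonoidAlgebra k (Gp p)) C C →ₗ[k] C
  hφC : ∀ (i j : ℕ) (x y : ℕ → Gp p),
      φC (omk k (MonoidAlgebra k (Gp p)) (RC.gen i x) (RC.gen j y)) = (-1 : k) ^ i •
        RC.gen (i + j + 1) (fun t =>
          if t ≤ i then x t
          else if t = i + 1 then x (i + 1) * y 0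
          else y (t - i - 1))
  φD : OverR k (SV k) D D →ₗ[k] D
  hφD_gr : ∀ (i j : ℕ) (x y : D), x ∈ RD.gr i → y ∈ RD.gr j →
      φD (omk k (SV k) x y) ∈ RD.gr (i + j + 1)
  hφD : RD.d ∘ₗ φD + φD ∘ₗ dTDD = lmuD - rmuD
  ot2X : (C ⊗[k] D) →ₗ[k]
      OverR k A (C ⊗[k] D) (C ⊗[k] D) →ₗ[k] Over3 k A (C ⊗[k] D)
  hot2X : ∀ x y z : C ⊗[k] D, ot2X x (omk k A y z) = omk3 k A x y z
  ΔRX : OverR k A (C ⊗[k] D) (C ⊗[k] D) →ₗ[k] Over3 k A (C ⊗[k] D)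
  hΔRX : ∀ x y : C ⊗[k] D,
      ΔRX (omk k A x y) = ot2X x ((Θ ∘ₗ TensorProduct.map ΔC ΔD) y)
  Tlam : Over3 k A (C ⊗[k] D) →ₗ[k] OverR k A (C ⊗[k] D) (C ⊗[k] D)
  hTlam : ∀ (i : ℕ) (x y z : C ⊗[k] D), x ∈ Xdeg k C D RC.gr RD.gr i →
      Tlam (omk3 k A x y z) =
        (-1 : k) ^ (i * 2) • omk k A x (lam y • z)

variable {p k C D A}

/-! ### Group-theoretic auxiliaries -/

lemma gg_pow_eq (h : Gp p) : gg p ^ (Multiplicative.toAdd h).val = h := by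
  haveI : NeZero p := ⟨(Fact.out : p.Prime).ne_zero⟩
  apply Multiplicative.toAdd.injective
  rw [toAdd_pow]
  show (Multiplicative.toAdd h).val • Multiplicative.toAdd (Multiplicative.ofAdd (1 : ZMod p)) = _
  rw [toAdd_ofAdd, nsmul_eq_mul, mul_one]
  exact ZMod.natCast_rightInverse _

/-- The additive character `G → k`. -/
def chi (h : Gp p) : k := ZMod.castHom (dvd_refl p) k (Multiplicative.toAdd h)

lemma chi_pow (m : ℕ) : (chi (gg p ^ m) : k) = (m : k) := by
  unfold chi
  rw [toAdd_pow]
  show (ZMod.castHom (dvd_refl p) k) ((m : ℕ) • Multiplicative.toAdd (Multiplicative.ofAdd (1 : ZMod p))) = _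
  rw [toAdd_ofAdd, nsmul_eq_mul, mul_one, map_natCast]

lemma chi_mul (h h' : Gp p) : (chi (h * h') : k) = chi h + chi h' := by
  unfold chi; rw [toAdd_mul, map_add]

lemma chi_one : (chi (1 : Gp p) : k) = 0 := by
  unfold chi; simp

lemma chi_add_inv (h : Gp p) : (chi h : k) + (chi h⁻¹ : k) = 0 := by
  rw [← chi_mul, mul_inv_cancel, chi_one]

lemma chi_val (h : Gp p) : (chi h : k) = (((Multiplicative.toAdd h).val : ℕ) : k) := by
  conv_lhs => rw [← gg_pow_eq h]
  rw [chi_pow]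


/-! ### Action of `G` on the Koszul resolution -/

lemma Dact0 (RD : KoszulD p k D) (h : Gp p) (s s' : SV k) :
    h • RD.gen0 s s' = RD.gen0 (h • s) (h • s') := by
  have key : ∀ (m : ℕ) (s s' : SV k),
      (gg p) ^ m • RD.gen0 s s' = RD.gen0 ((gg p) ^ m • s) ((gg p) ^ m • s') := by
    intro m
    induction m with
    | zero => intro s s'; simp
    | succ q ih =>
        intro s s'
        rw [pow_succ, mul_smul, RD.gact_gen0, ih, ← mul_smul, ← mul_smul, ← pow_succ]
  rw [← gg_pow_eq h]
  exact key _ s s'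

lemma Dact1v (RD : KoszulD p k D) (h : Gp p) (s s' : SV k) :
    h • RD.gen1v s s' = RD.gen1v (h • s) (h • s') := by
  have key : ∀ (m : ℕ) (s s' : SV k),
      (gg p) ^ m • RD.gen1v s s' = RD.gen1v ((gg p) ^ m • s) ((gg p) ^ m • s') := by
    intro m
    induction m with
    | zero => intro s s'; simp
    | succ q ih =>
        intro s s'
        rw [pow_succ, mul_smul, RD.gact_gen1v, ih, ← mul_smul, ← mul_smul, ← pow_succ]
  rw [← gg_pow_eq h]
  exact key _ s s'

lemma Dact2 (RD : KoszulD p k D) (h : Gp p) (s s' : SV k) :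
    h • RD.gen2 s s' = RD.gen2 (h • s) (h • s') := by
  have key : ∀ (m : ℕ) (s s' : SV k),
      (gg p) ^ m • RD.gen2 s s' = RD.gen2 ((gg p) ^ m • s) ((gg p) ^ m • s') := by
    intro m
    induction m with
    | zero => intro s s'; simp
    | succ q ih =>
        intro s s'
        rw [pow_succ, mul_smul, RD.gact_gen2, ih, ← mul_smul, ← mul_smul, ← pow_succ]
  rw [← gg_pow_eq h]
  exact key _ s s'

lemma Dact1w (RD : KoszulD p k D) (h : Gp p) (s s' : SV k) :
    h • RD.gen1w s s' =
      (chi h : k) • RD.gen1v (h • s) (h • s') + RD.gen1w (h • s) (h • s') := by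
  have key : ∀ (m : ℕ) (s s' : SV k),
      (gg p) ^ m • RD.gen1w s s' =
        ((m : ℕ) : k) • RD.gen1v ((gg p) ^ m • s) ((gg p) ^ m • s') +
          RD.gen1w ((gg p) ^ m • s) ((gg p) ^ m • s') := by
    intro m
    induction m with
    | zero => intro s s'; simp
    | succ q ih =>
        intro s s'
        rw [pow_succ, mul_smul, RD.gact_gen1w, smul_add, ih, Dact1v RD]
        rw [← mul_smul, ← mul_smul, ← pow_succ]
        push_cast
        rw [add_smul, one_smul]
        abel
  rw [← gg_pow_eq h, chi_pow]
  exact key _ s s'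

lemma act_v (hgv : gg p • vv k = vv k) (h : Gp p) : h • vv k = vv k := by
  conv_lhs => rw [← gg_pow_eq h]
  generalize (Multiplicative.toAdd h).val = m
  induction m with
  | zero => simp
  | succ q ih => rw [pow_succ, mul_smul, hgv, ih]

/-! ### The `A`-action on `X`, and values of `λ` -/

variable [Module A (C ⊗[k] D)] [Module Aᵐᵒᵖ (C ⊗[k] D)]
  [IsScalarTower k A (C ⊗[k] D)] [IsScalarTower k Aᵐᵒᵖ (C ⊗[k] D)]
  [SMulCommClass A Aᵐᵒᵖ (C ⊗[k] D)]

lemma actL_G (H : Ctx p k C D A) (g' : Gp p) (n : ℕ) (a : ℕ → Gp p) (d : D) :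
    H.ιG g' • (H.RC.gen n a ⊗ₜ[k] d) =
      H.RC.gen n (Function.update a 0 (g' * a 0)) ⊗ₜ[k] d := by
  have h := H.hactL 1 g' n a d
  rw [map_one, one_mul, smul_one, one_smul, H.RC.smul_gen] at h
  exact h

lemma L_v (H : Ctx p k C D A) (b : ℕ → Gp p) (s s' : SV k) :
    H.lam (H.RC.gen 1 b ⊗ₜ[k] H.RD.gen1v s s') = 0 := by
  haveI : NeZero p := ⟨(Fact.out : p.Prime).ne_zero⟩
  set b' : ℕ → Gp p := fun t => if t = 2 then 1 else b t with hb'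
  set e : ℕ → Gp p := fun t => if t = 1 then b 1 else 1 with he
  have hC : op (MonoidAlgebra.single (b 2) (1 : k)) • H.RC.gen 1 b' = H.RC.gen 1 b := by
    rw [H.RC.smul_op_gen]
    refine H.RC.gen_congr _ _ _ (fun t ht => ?_)
    simp only [Function.update_apply, hb']
    rcases eq_or_ne t 2 with rfl | h
    · norm_num
    · have : ¬ (t = 1 + 1) := by omega
      simp [this, h]
  have hD : (b 2)⁻¹ • (op ((b 2 : Gp p) • s') • ((b 2 : Gp p) • H.RD.gen1v s 1)) =
      H.RD.gen1v s s' := by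
    rw [Dact1v H.RD (b 2) s 1, smul_one, H.RD.smul_op_gen1v, one_mul, Dact1v H.RD,
      inv_smul_smul, inv_smul_smul]
  have hE : (op (H.ιS ((b 2 : Gp p) • s') * H.ιG (b 2))) •
        (H.RC.gen 1 b' ⊗ₜ[k] ((b 2 : Gp p) • H.RD.gen1v s 1)) =
      H.RC.gen 1 b ⊗ₜ[k] H.RD.gen1v s s' := by
    rw [H.hactR, hC, hD]
  rw [← hE, H.hlamR, unop_op]
  -- expand the middle
  rw [Dact1v H.RD (b 2) s 1, smul_one]
  -- peel the left action
  have hC2 : MonoidAlgebra.single (b 0) (1 : k) • H.RC.gen 1 e = H.RC.gen 1 b' := by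
    rw [H.RC.smul_gen]
    refine H.RC.gen_congr _ _ _ (fun t ht => ?_)
    simp only [Function.update_apply, he, hb']
    rcases eq_or_ne t 0 with rfl | h0
    · norm_num
    · rcases eq_or_ne t 1 with rfl | h1
      · norm_num
      · interval_cases t <;> simp_all
  have hprod : (b 0 * ∏ t ∈ Finset.range (1 + 2), e t) = b 0 * b 1 := by
    rw [show (1 + 2) = 3 from rfl, Finset.prod_range_succ, Finset.prod_range_succ,
      Finset.prod_range_one]
    simp [he]
  have hE2 : (H.ιS ((b 0 * b 1 : Gp p) • ((b 2 : Gp p) • s)) * H.ιG (b 0)) •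
        (H.RC.gen 1 e ⊗ₜ[k] H.RD.gen1v 1 1) =
      H.RC.gen 1 b' ⊗ₜ[k] H.RD.gen1v ((b 2 : Gp p) • s) 1 := by
    rw [H.hactL, hC2, hprod, inv_smul_smul, H.RD.smul_gen1v, mul_one]
  rw [← hE2, H.hlamL]
  have hcan : H.RC.gen 1 e =
      H.RC.gen 1 (fun t => if t = 1 then gg p ^ (Multiplicative.toAdd (b 1)).val else 1) := by
    refine H.RC.gen_congr _ _ _ (fun t ht => ?_)
    by_cases h : t = 1 <;> simp [he, h, gg_pow_eq]
  have hval : (Multiplicative.toAdd (b 1)).val ≤ p - 1 :=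
    Nat.le_pred_of_lt (ZMod.val_lt _)
  rw [hcan, H.hlam_v _ hval, mul_zero, zero_mul]

lemma L_w (H : Ctx p k C D A) (b : ℕ → Gp p) (s s' : SV k) :
    H.lam (H.RC.gen 1 b ⊗ₜ[k] H.RD.gen1w s s') =
      ((H.ιS ((b 0 * b 1 : Gp p) • ((b 2 : Gp p) • s)) * H.ιG (b 0)) *
        ((((Multiplicative.toAdd (b 1)).val : ℕ) : k) •
          H.ιG (gg p ^ ((Multiplicative.toAdd (b 1)).val - 1)))) *
      (H.ιS ((b 2 : Gp p) • s') * H.ιG (b 2)) := by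
  haveI : NeZero p := ⟨(Fact.out : p.Prime).ne_zero⟩
  set b' : ℕ → Gp p := fun t => if t = 2 then 1 else b t with hb'
  set e : ℕ → Gp p := fun t => if t = 1 then b 1 else 1 with he
  have hC : op (MonoidAlgebra.single (b 2) (1 : k)) • H.RC.gen 1 b' = H.RC.gen 1 b := by
    rw [H.RC.smul_op_gen]
    refine H.RC.gen_congr _ _ _ (fun t ht => ?_)
    simp only [Function.update_apply, hb']
    rcases eq_or_ne t 2 with rfl | h
    · norm_num
    · have : ¬ (t = 1 + 1) := by omega
      simp [this, h]
  have hD : (b 2)⁻¹ • (op ((b 2 : Gp p) • s') • ((b 2 : Gp p) • H.RD.gen1w s 1)) =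
      H.RD.gen1w s s' := by
    rw [Dact1w H.RD (b 2) s 1, smul_one, smul_add,
      smul_comm (op ((b 2 : Gp p) • s')) ((chi (b 2)) : k),
      H.RD.smul_op_gen1v, H.RD.smul_op_gen1w]
    simp only [one_mul]
    rw [smul_add, smul_comm ((b 2 : Gp p)⁻¹) ((chi (b 2)) : k), Dact1v H.RD, Dact1w H.RD]
    simp only [inv_smul_smul]
    rw [← add_assoc, ← add_smul, chi_add_inv, zero_smul, zero_add]
  have hE : (op (H.ιS ((b 2 : Gp p) • s') * H.ιG (b 2))) •
        (H.RC.gen 1 b' ⊗ₜ[k] ((b 2 : Gp p) • H.RD.gen1w s 1)) =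
      H.RC.gen 1 b ⊗ₜ[k] H.RD.gen1w s s' := by
    rw [H.hactR, hC, hD]
  rw [← hE, H.hlamR, unop_op]
  rw [Dact1w H.RD (b 2) s 1, smul_one, TensorProduct.tmul_add, TensorProduct.tmul_smul,
    map_add, map_smul, L_v H, smul_zero, zero_add]
  have hC2 : MonoidAlgebra.single (b 0) (1 : k) • H.RC.gen 1 e = H.RC.gen 1 b' := by
    rw [H.RC.smul_gen]
    refine H.RC.gen_congr _ _ _ (fun t ht => ?_)
    simp only [Function.update_apply, he, hb']
    rcases eq_or_ne t 0 with rfl | h0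
    · norm_num
    · rcases eq_or_ne t 1 with rfl | h1
      · norm_num
      · interval_cases t <;> simp_all
  have hprod : (b 0 * ∏ t ∈ Finset.range (1 + 2), e t) = b 0 * b 1 := by
    rw [show (1 + 2) = 3 from rfl, Finset.prod_range_succ, Finset.prod_range_succ,
      Finset.prod_range_one]
    simp [he]
  have hE2 : (H.ιS ((b 0 * b 1 : Gp p) • ((b 2 : Gp p) • s)) * H.ιG (b 0)) •
        (H.RC.gen 1 e ⊗ₜ[k] H.RD.gen1w 1 1) =
      H.RC.gen 1 b' ⊗ₜ[k] H.RD.gen1w ((b 2 : Gp p) • s) 1 := by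
    rw [H.hactL, hC2, hprod, inv_smul_smul, H.RD.smul_gen1w, mul_one]
  rw [← hE2, H.hlamL]
  have hcan : H.RC.gen 1 e =
      H.RC.gen 1 (fun t => if t = 1 then gg p ^ (Multiplicative.toAdd (b 1)).val else 1) := by
    refine H.RC.gen_congr _ _ _ (fun t ht => ?_)
    by_cases h : t = 1 <;> simp [he, h, gg_pow_eq]
  have hval : (Multiplicative.toAdd (b 1)).val ≤ p - 1 :=
    Nat.le_pred_of_lt (ZMod.val_lt _)
  rw [hcan, H.hlam_w _ hval]

/-! ### The key vanishing lemmas for `λ` -/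

lemma comm_v (H : Ctx p k C D A) (h : Gp p) :
    H.ιG h * H.ιS (vv k) = H.ιS (vv k) * H.ιG h := by
  rw [H.hcomm, act_v H.hgv]

lemma vslide (H : Ctx p k C D A) (h : Gp p) (y : A) :
    H.ιS (vv k) * (H.ιG h * y) = H.ιG h * (H.ιS (vv k) * y) := by
  rw [← mul_assoc, ← comm_v H, mul_assoc]

lemma Ldw (H : Ctx p k C D A) (b : ℕ → Gp p) (α β : SV k) :
    H.lam (H.RC.gen 1 b ⊗ₜ[k] H.RD.d (H.RD.gen2 α β)) = 0 := by
  rw [H.RD.d_gen2]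
  simp only [TensorProduct.tmul_sub, TensorProduct.tmul_add, map_sub, map_add]
  rw [L_v H, L_v H, L_w H, L_w H, sub_zero, add_zero, sub_eq_zero]
  simp only [smul_mul', act_v H.hgv, map_mul]
  simp only [mul_smul_comm, smul_mul_assoc]
  congr 1
  simp only [mul_assoc]
  rw [vslide H, vslide H]

lemma Ld2 (H : Ctx p k C D A) (b : ℕ → Gp p) :
    ∀ y ∈ H.RD.gr 2, H.lam (H.RC.gen 1 b ⊗ₜ[k] H.RD.d y) = 0 := by
  intro y hy
  refine Submodule.span_induction ?_ ?_ ?_ ?_ (H.RD.span2 hy)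
  · rintro z ⟨s, s', rfl⟩
    exact Ldw H b s s'
  · simp
  · intro u v _ _ hu hv
    rw [map_add, TensorProduct.tmul_add, map_add, hu, hv, add_zero]
  · intro a u _ hu
    rw [map_smul, TensorProduct.tmul_smul, map_smul, hu, smul_zero]

lemma Ephi (H : Ctx p k C D A) (b : ℕ → Gp p) (γ β : SV k) :
    H.lam (H.RC.gen 1 b ⊗ₜ[k]
      H.φD (omk k (SV k) (H.RD.gen0 γ 1) (H.RD.gen0 1 β))) = 0 := by
  set ξ := omk k (SV k) (H.RD.gen0 γ 1) (H.RD.gen0 1 β) with hξ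
  have hdT : H.dTDD ξ = 0 := by
    rw [hξ, H.hdTDD 0 _ _ (H.RD.gen0_gr γ 1), H.RD.d_gen0, H.RD.d_gen0, pow_zero, one_smul]
    show Submodule.Quotient.mk ((0 : D) ⊗ₜ[k] _) + Submodule.Quotient.mk (_ ⊗ₜ[k] (0 : D)) = 0
    rw [TensorProduct.zero_tmul, TensorProduct.tmul_zero]
    simp
  have hid := LinearMap.congr_fun H.hφD ξ
  rw [LinearMap.add_apply, LinearMap.comp_apply, LinearMap.comp_apply, LinearMap.sub_apply,
    hdT, map_zero, add_zero] at hid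
  have hlr : H.lmuD ξ - H.rmuD ξ = 0 := by
    rw [hξ, H.hlmuD, H.hrmuD, H.RD.aug_gen0, H.RD.aug_gen0, H.RD.smul_gen0, H.RD.smul_op_gen0]
    simp only [mul_one, one_mul, sub_self]
  rw [hlr] at hid
  set x := H.φD ξ with hx
  have hx1 : x ∈ H.RD.gr 1 := H.hφD_gr 0 0 _ _ (H.RD.gen0_gr γ 1) (H.RD.gen0_gr 1 β)
  have haugx : H.RD.aug x = 0 := H.RD.aug_gr 0 x hx1
  have hdT2 : H.dTDD (omk k (SV k) x (H.RD.gen0 1 1)) = 0 := by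
    rw [H.hdTDD 1 x _ hx1, hid, H.RD.d_gen0]
    show Submodule.Quotient.mk ((0 : D) ⊗ₜ[k] _) +
        (-1 : k) ^ 1 • Submodule.Quotient.mk (_ ⊗ₜ[k] (0 : D)) = 0
    rw [TensorProduct.zero_tmul, TensorProduct.tmul_zero]
    simp
  have hid2 := LinearMap.congr_fun H.hφD (omk k (SV k) x (H.RD.gen0 1 1))
  rw [LinearMap.add_apply, LinearMap.comp_apply, LinearMap.comp_apply, LinearMap.sub_apply,
    hdT2, map_zero, add_zero, H.hlmuD, H.hrmuD, haugx, zero_smul, H.RD.aug_gen0, one_mul,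
    op_one, one_smul, zero_sub] at hid2
  -- hid2 : RD.d (φD (omk x gen0_11)) = -x
  have hy2 : H.φD (omk k (SV k) x (H.RD.gen0 1 1)) ∈ H.RD.gr 2 :=
    H.hφD_gr 1 0 x _ hx1 (H.RD.gen0_gr 1 1)
  have hxeq : x = - H.RD.d (H.φD (omk k (SV k) x (H.RD.gen0 1 1))) := by
    rw [hid2, neg_neg]
  rw [hxeq, TensorProduct.tmul_neg, map_neg, Ld2 H b _ hy2, neg_zero]

/-! ### Vanishing of `λ` on generators of the wrong bidegree -/

lemma M0 (H : Ctx p k C D A) (r : ℕ) (b : ℕ → Gp p) (σ τ : SV k) :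
    H.lam (H.RC.gen r b ⊗ₜ[k] H.RD.gen0 σ τ) = 0 :=
  H.hlam_supp r 0 (by simp) _ (H.RC.gen_gr r b) _ (H.RD.gen0_gr σ τ)

lemma M1v (H : Ctx p k C D A) (r : ℕ) (b : ℕ → Gp p) (σ τ : SV k) :
    H.lam (H.RC.gen r b ⊗ₜ[k] H.RD.gen1v σ τ) = 0 := by
  rcases eq_or_ne r 1 with rfl | hr
  · exact L_v H b σ τ
  · exact H.hlam_supp r 1 (fun hc => hr hc.1) _ (H.RC.gen_gr r b) _ (H.RD.gen1v_gr σ τ)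

lemma M2 (H : Ctx p k C D A) (r : ℕ) (b : ℕ → Gp p) (σ τ : SV k) :
    H.lam (H.RC.gen r b ⊗ₜ[k] H.RD.gen2 σ τ) = 0 :=
  H.hlam_supp r 2 (by simp) _ (H.RC.gen_gr r b) _ (H.RD.gen2_gr σ τ)

lemma M1w_ne (H : Ctx p k C D A) (r : ℕ) (hr : r ≠ 1) (b : ℕ → Gp p) (σ τ : SV k) :
    H.lam (H.RC.gen r b ⊗ₜ[k] H.RD.gen1w σ τ) = 0 :=
  H.hlam_supp r 1 (fun hc => hr hc.1) _ (H.RC.gen_gr r b) _ (H.RD.gen1w_gr σ τ)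

lemma Xmem {grC : ℕ → Submodule k C} {grD : ℕ → Submodule k D} {c : C} {d : D} {n m : ℕ}
    (hc : c ∈ grC n) (hd : d ∈ grD m) :
    c ⊗ₜ[k] d ∈ Xdeg k C D grC grD (n + m) := by
  refine Submodule.mem_iSup_of_mem (n, m) ?_
  refine Submodule.mem_iSup_of_mem rfl ?_
  exact Submodule.subset_span ⟨c, hc, d, hd, rfl⟩

/-! ### Vanishing of the final stage on the surviving terms -/

lemma RK0 (H : Ctx p k C D A) (i : ℕ) (x : ℕ → Gp p) (E₁ : D) (j₁ : ℕ)
    (hQ : ∀ h : Gp p, h • E₁ ∈ H.RD.gr j₁)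
    (hsh : j₁ = 0 → ∀ h : Gp p, ∃ γ : SV k, h • E₁ = H.RD.gen0 γ 1)
    (m : ℕ) (c : ℕ → Gp p) (τ : SV k) :
    H.lam ((TensorProduct.map H.φC H.lmuD + TensorProduct.map (H.RC.eps ∘ₗ H.rmuC) H.φD)
      (H.tauInvQ (omk k A (H.RC.gen i x ⊗ₜ[k] E₁)
        (H.RC.gen m c ⊗ₜ[k] H.RD.gen0 1 τ)))) = 0 := by
  have hE : E₁ ∈ H.RD.gr j₁ := by simpa using hQ 1
  rw [H.htauInvQ i m j₁ x c E₁ _ hE, map_smul, map_smul]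
  rw [LinearMap.add_apply, TensorProduct.map_tmul, TensorProduct.map_tmul, map_add]
  rw [H.hφC i m x c, H.hlmuD, H.RD.smul_gen0, ← TensorProduct.smul_tmul', map_smul,
    M0 H, smul_zero, zero_add]
  rw [LinearMap.comp_apply, H.hrmuC]
  cases m with
  | succ μ =>
      have h0 : H.RC.aug (H.RC.gen (μ + 1) c) = 0 := H.RC.aug_gr μ _ (H.RC.gen_gr _ _)
      rw [h0, op_zero, zero_smul, map_zero, TensorProduct.zero_tmul, map_zero, smul_zero]
  | zero =>
      rw [H.RC.aug_gen, H.RC.smul_op_gen, H.RC.eps_gen, ← TensorProduct.smul_tmul', map_smul]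
      by_cases hc : i = 1 ∧ j₁ = 0
      · obtain ⟨hi, hj⟩ := hc
        subst hi; subst hj
        obtain ⟨γ, hγ⟩ := hsh rfl ((∏ t ∈ Finset.range (0 + 2), c t)⁻¹)
        rw [hγ, Ephi H]
        simp
      · have hnc : ¬(i = 1 ∧ j₁ + 0 + 1 = 1) := fun hh => hc ⟨hh.1, by omega⟩
        rw [H.hlam_supp i (j₁ + 0 + 1) hnc _ (H.RC.gen_gr _ _) _
          (H.hφD_gr j₁ 0 _ _ (hQ _) (H.RD.gen0_gr 1 τ))]
        simp

lemma RKv (H : Ctx p k C D A) (i : ℕ) (x : ℕ → Gp p) (E₁ : D) (j₁ : ℕ)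
    (hQ : ∀ h : Gp p, h • E₁ ∈ H.RD.gr j₁)
    (m : ℕ) (c : ℕ → Gp p) (τ : SV k) :
    H.lam ((TensorProduct.map H.φC H.lmuD + TensorProduct.map (H.RC.eps ∘ₗ H.rmuC) H.φD)
      (H.tauInvQ (omk k A (H.RC.gen i x ⊗ₜ[k] E₁)
        (H.RC.gen m c ⊗ₜ[k] H.RD.gen1v 1 τ)))) = 0 := by
  have hE : E₁ ∈ H.RD.gr j₁ := by simpa using hQ 1
  rw [H.htauInvQ i m j₁ x c E₁ _ hE, map_smul, map_smul]
  rw [LinearMap.add_apply, TensorProduct.map_tmul, TensorProduct.map_tmul, map_add]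
  rw [H.hφC i m x c, H.hlmuD, H.RD.smul_gen1v, ← TensorProduct.smul_tmul', map_smul,
    M1v H, smul_zero, zero_add]
  rw [LinearMap.comp_apply, H.hrmuC]
  cases m with
  | succ μ =>
      have h0 : H.RC.aug (H.RC.gen (μ + 1) c) = 0 := H.RC.aug_gr μ _ (H.RC.gen_gr _ _)
      rw [h0, op_zero, zero_smul, map_zero, TensorProduct.zero_tmul, map_zero, smul_zero]
  | zero =>
      rw [H.RC.aug_gen, H.RC.smul_op_gen, H.RC.eps_gen, ← TensorProduct.smul_tmul', map_smul]
      have hnc : ¬(i = 1 ∧ j₁ + 1 + 1 = 1) := fun hh => by omega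
      rw [H.hlam_supp i (j₁ + 1 + 1) hnc _ (H.RC.gen_gr _ _) _
        (H.hφD_gr j₁ 1 _ _ (hQ _) (H.RD.gen1v_gr 1 τ))]
      simp

/-! ### The inner computation -/

lemma omkA_zero (x : C ⊗[k] D) : omk k A x (0 : C ⊗[k] D) = 0 := by
  show Submodule.Quotient.mk (x ⊗ₜ[k] (0 : C ⊗[k] D)) = 0
  rw [TensorProduct.tmul_zero]
  exact Submodule.Quotient.mk_zero _

lemma inner_g0 (H : Ctx p k C D A) (i : ℕ) (x : ℕ → Gp p) (E₁ : D) (j₁ : ℕ)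
    (hQ : ∀ h : Gp p, h • E₁ ∈ H.RD.gr j₁) (i' : ℕ) (x' : ℕ → Gp p) (τ : SV k) :
    H.lam ((TensorProduct.map H.φC H.lmuD + TensorProduct.map (H.RC.eps ∘ₗ H.rmuC) H.φD)
      (H.tauInvQ (H.Tlam (H.ΔRX (omk k A (H.RC.gen i x ⊗ₜ[k] E₁)
        (H.RC.gen i' x' ⊗ₜ[k] H.RD.gen0 1 τ)))))) = 0 := by
  have hE : E₁ ∈ H.RD.gr j₁ := by simpa using hQ 1
  rw [H.hΔRX, LinearMap.comp_apply, TensorProduct.map_tmul, H.hΔC, H.hΔD0,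
    TensorProduct.sum_tmul]
  simp only [map_sum]
  refine Finset.sum_eq_zero fun r hr => ?_
  rw [H.hΘ r (i' - r) 0 _ _ _ _ (H.RD.gen0_gr 1 1)]
  rw [Dact0 H.RD, smul_one]
  rw [Nat.mul_zero, pow_zero, one_smul]
  rw [H.hot2X]
  rw [H.hTlam (i + j₁) _ _ _ (Xmem (H.RC.gen_gr i x) hE)]
  rw [M0 H, zero_smul, omkA_zero]
  simp

lemma inner_g1v (H : Ctx p k C D A) (i : ℕ) (x : ℕ → Gp p) (E₁ : D) (j₁ : ℕ)
    (hQ : ∀ h : Gp p, h • E₁ ∈ H.RD.gr j₁) (i' : ℕ) (x' : ℕ → Gp p) (τ : SV k) :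
    H.lam ((TensorProduct.map H.φC H.lmuD + TensorProduct.map (H.RC.eps ∘ₗ H.rmuC) H.φD)
      (H.tauInvQ (H.Tlam (H.ΔRX (omk k A (H.RC.gen i x ⊗ₜ[k] E₁)
        (H.RC.gen i' x' ⊗ₜ[k] H.RD.gen1v 1 τ)))))) = 0 := by
  have hE : E₁ ∈ H.RD.gr j₁ := by simpa using hQ 1
  rw [H.hΔRX, LinearMap.comp_apply, TensorProduct.map_tmul, H.hΔC, H.hΔD1v,
    TensorProduct.sum_tmul]
  simp only [TensorProduct.tmul_add, map_sum, map_add]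
  refine Finset.sum_eq_zero fun r hr => ?_
  rw [H.hΘ r (i' - r) 0 _ _ _ _ (H.RD.gen0_gr 1 1),
    H.hΘ r (i' - r) 1 _ _ _ _ (H.RD.gen1v_gr 1 1)]
  rw [Dact0 H.RD, smul_one, Dact1v H.RD, smul_one]
  rw [Nat.mul_zero, pow_zero, one_smul]
  simp only [map_smul]
  rw [H.hot2X, H.hot2X,
    H.hTlam (i + j₁) _ _ _ (Xmem (H.RC.gen_gr i x) hE),
    H.hTlam (i + j₁) _ _ _ (Xmem (H.RC.gen_gr i x) hE)]
  rw [M0 H, M1v H]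
  simp only [zero_smul, omkA_zero]
  simp

lemma omkA_smul (c : k) (x y : C ⊗[k] D) :
    omk k A x (c • y) = c • omk k A x y := by
  show Submodule.Quotient.mk (x ⊗ₜ[k] (c • y)) = c • Submodule.Quotient.mk (x ⊗ₜ[k] y)
  rw [TensorProduct.tmul_smul]
  exact Submodule.Quotient.mk_smul _ _ _


lemma mid_w (H : Ctx p k C D A) (x' : ℕ → Gp p) :
    H.lam (H.RC.gen 1 (fun t => if t ≤ 1 then x' t else 1) ⊗ₜ[k] H.RD.gen1w 1 1) =
      (((Multiplicative.toAdd (x' 1)).val : ℕ) : k) •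
        H.ιG (x' 0 * gg p ^ ((Multiplicative.toAdd (x' 1)).val - 1)) := by
  rw [L_w H]
  norm_num

set_option maxHeartbeats 2000000 in
lemma inner_g1w (H : Ctx p k C D A) (i : ℕ) (x : ℕ → Gp p) (E₁ : D) (j₁ : ℕ)
    (hQ : ∀ h : Gp p, h • E₁ ∈ H.RD.gr j₁)
    (hsh : j₁ = 0 → ∀ h : Gp p, ∃ γ : SV k, h • E₁ = H.RD.gen0 γ 1)
    (i' : ℕ) (x' : ℕ → Gp p) (τ : SV k) :
    H.lam ((TensorProduct.map H.φC H.lmuD + TensorProduct.map (H.RC.eps ∘ₗ H.rmuC) H.φD)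
      (H.tauInvQ (H.Tlam (H.ΔRX (omk k A (H.RC.gen i x ⊗ₜ[k] E₁)
        (H.RC.gen i' x' ⊗ₜ[k] H.RD.gen1w 1 τ)))))) = 0 := by
  have hE : E₁ ∈ H.RD.gr j₁ := by simpa using hQ 1
  rw [H.hΔRX, LinearMap.comp_apply, TensorProduct.map_tmul, H.hΔC, H.hΔD1w,
    TensorProduct.sum_tmul]
  simp only [TensorProduct.tmul_add, map_sum, map_add]
  refine Finset.sum_eq_zero fun r hr => ?_
  rw [H.hΘ r (i' - r) 0 _ _ _ _ (H.RD.gen0_gr 1 1),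
    H.hΘ r (i' - r) 1 _ _ _ _ (H.RD.gen1w_gr 1 1)]
  rw [Dact0 H.RD, smul_one, Dact1w H.RD, smul_one]
  rw [Nat.mul_zero, pow_zero, one_smul]
  simp only [map_smul]
  rw [H.hot2X, H.hot2X,
    H.hTlam (i + j₁) _ _ _ (Xmem (H.RC.gen_gr i x) hE),
    H.hTlam (i + j₁) _ _ _ (Xmem (H.RC.gen_gr i x) hE)]
  rw [M0 H]
  rw [TensorProduct.tmul_add, TensorProduct.tmul_smul]
  simp only [map_add, map_smul]
  rw [M1v H, smul_zero, zero_add]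
  rcases eq_or_ne r 1 with rfl | hr1
  · rw [mid_w H x', smul_assoc, actL_G H, omkA_smul]
    simp only [map_smul]
    rw [RK0 H i x E₁ j₁ hQ hsh (i' - 1) _ τ]
    simp only [zero_smul, omkA_zero]
    simp
  · rw [M1w_ne H r hr1]
    simp only [zero_smul, omkA_zero]
    simp

set_option maxHeartbeats 4000000 in
lemma inner_g2 (H : Ctx p k C D A) (i : ℕ) (x : ℕ → Gp p) (E₁ : D) (j₁ : ℕ)
    (hQ : ∀ h : Gp p, h • E₁ ∈ H.RD.gr j₁)
    (i' : ℕ) (x' : ℕ → Gp p) (τ : SV k) :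
    H.lam ((TensorProduct.map H.φC H.lmuD + TensorProduct.map (H.RC.eps ∘ₗ H.rmuC) H.φD)
      (H.tauInvQ (H.Tlam (H.ΔRX (omk k A (H.RC.gen i x ⊗ₜ[k] E₁)
        (H.RC.gen i' x' ⊗ₜ[k] H.RD.gen2 1 τ)))))) = 0 := by
  have hE : E₁ ∈ H.RD.gr j₁ := by simpa using hQ 1
  rw [H.hΔRX, LinearMap.comp_apply, TensorProduct.map_tmul, H.hΔC, H.hΔD2,
    TensorProduct.sum_tmul]
  simp only [TensorProduct.tmul_add, TensorProduct.tmul_sub, map_sum, map_add, map_sub]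
  refine Finset.sum_eq_zero fun r hr => ?_
  rw [H.hΘ r (i' - r) 0 _ _ _ _ (H.RD.gen0_gr 1 1),
    H.hΘ r (i' - r) 1 _ _ _ _ (H.RD.gen1v_gr 1 1),
    H.hΘ r (i' - r) 1 _ _ _ _ (H.RD.gen1w_gr 1 1),
    H.hΘ r (i' - r) 2 _ _ _ _ (H.RD.gen2_gr 1 1)]
  rw [Dact0 H.RD, Dact1v H.RD, Dact1w H.RD, Dact2 H.RD]
  simp only [smul_one]
  rw [Nat.mul_zero, pow_zero, one_smul]
  simp only [map_smul]
  rw [H.hot2X, H.hot2X, H.hot2X, H.hot2X,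
    H.hTlam (i + j₁) _ _ _ (Xmem (H.RC.gen_gr i x) hE),
    H.hTlam (i + j₁) _ _ _ (Xmem (H.RC.gen_gr i x) hE),
    H.hTlam (i + j₁) _ _ _ (Xmem (H.RC.gen_gr i x) hE),
    H.hTlam (i + j₁) _ _ _ (Xmem (H.RC.gen_gr i x) hE)]
  rw [M0 H, M2 H]
  rw [TensorProduct.tmul_add, TensorProduct.tmul_smul]
  simp only [map_add, map_smul]
  rw [M1v H, smul_zero, zero_add]
  rcases eq_or_ne r 1 with rfl | hr1
  · rw [mid_w H x', smul_assoc, actL_G H, omkA_smul]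
    simp only [map_smul]
    rw [RKv H i x E₁ j₁ hQ (i' - 1) _ τ]
    simp only [zero_smul, omkA_zero]
    simp
  · rw [M1w_ne H r hr1]
    simp only [zero_smul, omkA_zero]
    simp
set_option maxHeartbeats 1000000 in
lemma outer_g0 (H : Ctx p k C D A) (n : ℕ) (a : ℕ → Gp p) (s s' : SV k) :
    H.lam ((TensorProduct.map H.φC H.lmuD + TensorProduct.map (H.RC.eps ∘ₗ H.rmuC) H.φD)
      (H.tauInvQ (H.Tlam (H.ΔRX (H.Θ ((TensorProduct.map H.ΔC H.ΔD)
        (H.RC.gen n a ⊗ₜ[k] H.RD.gen0 s s'))))))) = 0 := by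
  rw [TensorProduct.map_tmul, H.hΔC, H.hΔD0, TensorProduct.sum_tmul]
  simp only [map_sum]
  refine Finset.sum_eq_zero fun j hj => ?_
  rw [H.hΘ j (n - j) 0 _ _ _ _ (H.RD.gen0_gr s 1), Nat.mul_zero, pow_zero, one_smul]
  rw [inner_g0 H j _ _ 0 ?hq (n - j) _ s']
  case hq => intro h; rw [smul_smul, Dact0 H.RD]; exact H.RD.gen0_gr _ _

set_option maxHeartbeats 1000000 in
lemma outer_g1v (H : Ctx p k C D A) (n : ℕ) (a : ℕ → Gp p) (s s' : SV k) :
    H.lam ((TensorProduct.map H.φC H.lmuD + TensorProduct.map (H.RC.eps ∘ₗ H.rmuC) H.φD)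
      (H.tauInvQ (H.Tlam (H.ΔRX (H.Θ ((TensorProduct.map H.ΔC H.ΔD)
        (H.RC.gen n a ⊗ₜ[k] H.RD.gen1v s s'))))))) = 0 := by
  rw [TensorProduct.map_tmul, H.hΔC, H.hΔD1v, TensorProduct.sum_tmul]
  simp only [TensorProduct.tmul_add, map_sum, map_add]
  refine Finset.sum_eq_zero fun j hj => ?_
  rw [H.hΘ j (n - j) 0 _ _ _ _ (H.RD.gen0_gr s 1),
    H.hΘ j (n - j) 1 _ _ _ _ (H.RD.gen1v_gr s 1),
    Nat.mul_zero, pow_zero, one_smul]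
  simp only [map_smul]
  rw [inner_g1v H j _ _ 0 ?hq1 (n - j) _ s', inner_g0 H j _ _ 1 ?hq2 (n - j) _ s',
    smul_zero, add_zero]
  case hq1 => intro h; rw [smul_smul, Dact0 H.RD]; exact H.RD.gen0_gr _ _
  case hq2 => intro h; rw [smul_smul, Dact1v H.RD]; exact H.RD.gen1v_gr _ _
set_option maxHeartbeats 1000000 in
lemma outer_g1w (H : Ctx p k C D A) (n : ℕ) (a : ℕ → Gp p) (s s' : SV k) :
    H.lam ((TensorProduct.map H.φC H.lmuD + TensorProduct.map (H.RC.eps ∘ₗ H.rmuC) H.φD)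
      (H.tauInvQ (H.Tlam (H.ΔRX (H.Θ ((TensorProduct.map H.ΔC H.ΔD)
        (H.RC.gen n a ⊗ₜ[k] H.RD.gen1w s s'))))))) = 0 := by
  rw [TensorProduct.map_tmul, H.hΔC, H.hΔD1w, TensorProduct.sum_tmul]
  simp only [TensorProduct.tmul_add, map_sum, map_add]
  refine Finset.sum_eq_zero fun j hj => ?_
  rw [H.hΘ j (n - j) 0 _ _ _ _ (H.RD.gen0_gr s 1),
    H.hΘ j (n - j) 1 _ _ _ _ (H.RD.gen1w_gr s 1),
    Nat.mul_zero, pow_zero, one_smul]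
  simp only [map_smul]
  rw [inner_g1w H j _ _ 0 ?hq1 ?hs1 (n - j) _ s', inner_g0 H j _ _ 1 ?hq2 (n - j) _ s',
    smul_zero, add_zero]
  case hq1 => intro h; rw [smul_smul, Dact0 H.RD]; exact H.RD.gen0_gr _ _
  case hs1 =>
    intro _ h
    exact ⟨_, by rw [smul_smul, Dact0 H.RD, smul_one]⟩
  case hq2 =>
    intro h
    rw [smul_smul, Dact1w H.RD]
    exact Submodule.add_mem _ (Submodule.smul_mem _ _ (H.RD.gen1v_gr _ _)) (H.RD.gen1w_gr _ _)

set_option maxHeartbeats 2000000 in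
lemma outer_g2 (H : Ctx p k C D A) (n : ℕ) (a : ℕ → Gp p) (s s' : SV k) :
    H.lam ((TensorProduct.map H.φC H.lmuD + TensorProduct.map (H.RC.eps ∘ₗ H.rmuC) H.φD)
      (H.tauInvQ (H.Tlam (H.ΔRX (H.Θ ((TensorProduct.map H.ΔC H.ΔD)
        (H.RC.gen n a ⊗ₜ[k] H.RD.gen2 s s'))))))) = 0 := by
  rw [TensorProduct.map_tmul, H.hΔC, H.hΔD2, TensorProduct.sum_tmul]
  simp only [TensorProduct.tmul_add, TensorProduct.tmul_sub, map_sum, map_add, map_sub]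
  refine Finset.sum_eq_zero fun j hj => ?_
  rw [H.hΘ j (n - j) 0 _ _ _ _ (H.RD.gen0_gr s 1),
    H.hΘ j (n - j) 1 _ _ _ _ (H.RD.gen1v_gr s 1),
    H.hΘ j (n - j) 1 _ _ _ _ (H.RD.gen1w_gr s 1),
    H.hΘ j (n - j) 2 _ _ _ _ (H.RD.gen2_gr s 1),
    Nat.mul_zero, pow_zero, one_smul]
  simp only [map_smul]
  rw [inner_g2 H j _ _ 0 ?hq1 (n - j) _ s',
    inner_g1w H j _ _ 1 ?hq2 ?hs2 (n - j) _ s',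
    inner_g1v H j _ _ 1 ?hq3 (n - j) _ s',
    inner_g0 H j _ _ 2 ?hq4 (n - j) _ s']
  case hq1 => intro h; rw [smul_smul, Dact0 H.RD]; exact H.RD.gen0_gr _ _
  case hq2 => intro h; rw [smul_smul, Dact1v H.RD]; exact H.RD.gen1v_gr _ _
  case hs2 => intro h0; exact absurd h0 one_ne_zero
  case hq3 =>
    intro h
    rw [smul_smul, Dact1w H.RD]
    exact Submodule.add_mem _ (Submodule.smul_mem _ _ (H.RD.gen1v_gr _ _)) (H.RD.gen1w_gr _ _)
  case hq4 => intro h; rw [smul_smul, Dact2 H.RD]; exact H.RD.gen2_gr _ _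
  simp
lemma red {A' : Type u} [AddCommGroup A'] [Module k A'] (RC : RedBarC p k C)
    (RD : KoszulD p k D) (F : C ⊗[k] D →ₗ[k] A')
    (h0 : ∀ (n : ℕ) (a : ℕ → Gp p) (s s' : SV k), F (RC.gen n a ⊗ₜ[k] RD.gen0 s s') = 0)
    (h1v : ∀ (n : ℕ) (a : ℕ → Gp p) (s s' : SV k), F (RC.gen n a ⊗ₜ[k] RD.gen1v s s') = 0)
    (h1w : ∀ (n : ℕ) (a : ℕ → Gp p) (s s' : SV k), F (RC.gen n a ⊗ₜ[k] RD.gen1w s s') = 0)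
    (h2 : ∀ (n : ℕ) (a : ℕ → Gp p) (s s' : SV k), F (RC.gen n a ⊗ₜ[k] RD.gen2 s s') = 0) :
    F = 0 := by
  have hgen : ∀ (n : ℕ) (a : ℕ → Gp p) (d : D), F (RC.gen n a ⊗ₜ[k] d) = 0 := by
    intro n a d
    have hd : d ∈ ⨆ m, RD.gr m := by rw [RD.internal.submodule_iSup_eq_top]; trivial
    refine Submodule.iSup_induction (motive := fun y => F (RC.gen n a ⊗ₜ[k] y) = 0) RD.gr hd
      (fun m y hy => ?_) (by simp)
      (fun u v hu hv => by
        show F (RC.gen n a ⊗ₜ[k] (u + v)) = 0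
        rw [TensorProduct.tmul_add, map_add, hu, hv, add_zero])
    match m with
    | 0 =>
        refine Submodule.span_induction ?_ (by simp) ?_ ?_ (RD.span0 hy)
        · rintro z ⟨s, s', rfl⟩; exact h0 n a s s'
        · intro u v _ _ hu hv
          show F (RC.gen n a ⊗ₜ[k] (u + v)) = 0
          rw [TensorProduct.tmul_add, map_add]
          rw [show F (RC.gen n a ⊗ₜ[k] u) = 0 from hu, show F (RC.gen n a ⊗ₜ[k] v) = 0 from hv,
            add_zero]
        · intro t u _ hu
          show F (RC.gen n a ⊗ₜ[k] (t • u)) = 0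
          rw [TensorProduct.tmul_smul, map_smul, show F (RC.gen n a ⊗ₜ[k] u) = 0 from hu,
            smul_zero]
    | 1 =>
        refine Submodule.span_induction ?_ (by simp) ?_ ?_ (RD.span1 hy)
        · rintro z (⟨s, s', rfl⟩ | ⟨s, s', rfl⟩)
          · exact h1v n a s s'
          · exact h1w n a s s'
        · intro u v _ _ hu hv
          show F (RC.gen n a ⊗ₜ[k] (u + v)) = 0
          rw [TensorProduct.tmul_add, map_add]
          rw [show F (RC.gen n a ⊗ₜ[k] u) = 0 from hu, show F (RC.gen n a ⊗ₜ[k] v) = 0 from hv,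
            add_zero]
        · intro t u _ hu
          show F (RC.gen n a ⊗ₜ[k] (t • u)) = 0
          rw [TensorProduct.tmul_smul, map_smul, show F (RC.gen n a ⊗ₜ[k] u) = 0 from hu,
            smul_zero]
    | 2 =>
        refine Submodule.span_induction ?_ (by simp) ?_ ?_ (RD.span2 hy)
        · rintro z ⟨s, s', rfl⟩; exact h2 n a s s'
        · intro u v _ _ hu hv
          show F (RC.gen n a ⊗ₜ[k] (u + v)) = 0
          rw [TensorProduct.tmul_add, map_add]
          rw [show F (RC.gen n a ⊗ₜ[k] u) = 0 from hu, show F (RC.gen n a ⊗ₜ[k] v) = 0 from hv,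
            add_zero]
        · intro t u _ hu
          show F (RC.gen n a ⊗ₜ[k] (t • u)) = 0
          rw [TensorProduct.tmul_smul, map_smul, show F (RC.gen n a ⊗ₜ[k] u) = 0 from hu,
            smul_zero]
    | (m + 3) =>
        have hz : y = 0 := by
          have := hy
          rw [RD.gr_top m] at this
          simpa using this
        rw [hz]
        simp
  have hC : ∀ (c : C) (d : D), F (c ⊗ₜ[k] d) = 0 := by
    intro c d
    have hc : c ∈ ⨆ n, RC.gr n := by rw [RC.internal.submodule_iSup_eq_top]; trivial
    refine Submodule.iSup_induction (motive := fun y => F (y ⊗ₜ[k] d) = 0) RC.gr hc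
      (fun n y hy => ?_) (by simp)
      (fun u v hu hv => by
        show F ((u + v) ⊗ₜ[k] d) = 0
        rw [TensorProduct.add_tmul, map_add, hu, hv, add_zero])
    refine Submodule.span_induction ?_ (by simp) ?_ ?_ (RC.gen_span n hy)
    · rintro z ⟨a, rfl⟩; exact hgen n a d
    · intro u v _ _ hu hv
      show F ((u + v) ⊗ₜ[k] d) = 0
      rw [TensorProduct.add_tmul, map_add]
      rw [show F (u ⊗ₜ[k] d) = 0 from hu, show F (v ⊗ₜ[k] d) = 0 from hv, add_zero]
    · intro t u _ hu
      show F ((t • u) ⊗ₜ[k] d) = 0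
      rw [← TensorProduct.smul_tmul', map_smul, show F (u ⊗ₜ[k] d) = 0 from hu, smul_zero]
  apply LinearMap.ext
  intro z
  rw [LinearMap.zero_apply]
  induction z using TensorProduct.induction_on with
  | zero => simp
  | tmul c d => exact hC c d
  | add u v hu hv => rw [map_add, hu, hv, add_zero]

lemma main (H : Ctx p k C D A) :
    (H.lam ∘ₗ ((TensorProduct.map H.φC H.lmuD +
        TensorProduct.map (H.RC.eps ∘ₗ H.rmuC) H.φD) ∘ₗ H.tauInvQ) ∘ₗ
      H.Tlam ∘ₗ (H.ΔRX ∘ₗ (H.Θ ∘ₗ TensorProduct.map H.ΔC H.ΔD))) = 0 := by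
  refine red H.RC H.RD _ ?_ ?_ ?_ ?_ <;> intro n a s s'
  · simpa only [LinearMap.comp_apply] using outer_g0 H n a s s'
  · simpa only [LinearMap.comp_apply] using outer_g1v H n a s s'
  · simpa only [LinearMap.comp_apply] using outer_g1w H n a s s'
  · simpa only [LinearMap.comp_apply] using outer_g2 H n a s s'
end BLL
set_option maxHeartbeats 1000000 in
/-- In the transvection group example, the Gerstenhaber square
bracket of the 2-cocycle `λ` with itself vanishes at the cochain level, computed via the
twisted product resolution: in particular `λ ∘_X λ = 0` on `X₃`, and hence
`[λ, λ] = λ ∘_X λ + λ ∘_X λ = 0`. -/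
theorem bracket_lambda_lambda
    (RC : RedBarC p k C) (RD : KoszulD p k D)
    -- the action of `G` on `S(V) = k[v,w]`: `ᵍv = v`, `ᵍw = v + w`
    (hgv : gg p • vv k = vv k) (hgw : gg p • ww k = vv k + ww k)
    -- the skew group algebra `A = S(V) ⋊ G`
    (ιS : SV k →ₐ[k] A) (ιG : Gp p →* A)
    (hcomm : ∀ (g : Gp p) (s : SV k), ιG g * ιS s = ιS (g • s) * ιG g)
    (hskew : Function.Bijective (skewAssembly p k A ιS ιG))
    -- the `A`-bimodule structure on `X = C ⊗ D` (twisted product resolution)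
    [Module A (C ⊗[k] D)] [Module Aᵐᵒᵖ (C ⊗[k] D)]
    [IsScalarTower k A (C ⊗[k] D)] [IsScalarTower k Aᵐᵒᵖ (C ⊗[k] D)]
    [SMulCommClass A Aᵐᵒᵖ (C ⊗[k] D)]
    (hactL : ∀ (s' : SV k) (g' : Gp p) (n : ℕ) (a : ℕ → Gp p) (d : D),
      (ιS s' * ιG g') • (RC.gen n a ⊗ₜ[k] d) =
        ((MonoidAlgebra.single g' (1 : k)) • RC.gen n a) ⊗ₜ[k]
          ((((g' * ∏ t ∈ Finset.range (n + 2), a t)⁻¹ : Gp p) • s') • d))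
    (hactR : ∀ (s : SV k) (g : Gp p) (c : C) (d : D),
      (op (ιS s * ιG g)) • (c ⊗ₜ[k] d) =
        (op (MonoidAlgebra.single g (1 : k)) • c) ⊗ₜ[k] ((g⁻¹ : Gp p) • (op s • d)))
    -- the cochain `λ ∈ Hom_{A^e}(X_{1,1}, A)`:
    (lam : C ⊗[k] D →ₗ[k] A)
    (hlamL : ∀ (a : A) (x : C ⊗[k] D), lam (a • x) = a * lam x)
    (hlamR : ∀ (c : Aᵐᵒᵖ) (x : C ⊗[k] D), lam (c • x) = lam x * c.unop)
    (hlam_supp : ∀ i j : ℕ, ¬(i = 1 ∧ j = 1) →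
      ∀ c ∈ RC.gr i, ∀ d ∈ RD.gr j, lam (c ⊗ₜ[k] d) = 0)
    (hlam_v : ∀ i : ℕ, i ≤ p - 1 →
      lam (RC.gen 1 (fun t => if t = 1 then (gg p) ^ i else 1) ⊗ₜ[k] RD.gen1v 1 1) = 0)
    (hlam_w : ∀ i : ℕ, i ≤ p - 1 →
      lam (RC.gen 1 (fun t => if t = 1 then (gg p) ^ i else 1) ⊗ₜ[k] RD.gen1w 1 1) =
        (i : k) • ιG ((gg p) ^ (i - 1)))
    -- the differential on `D ⊗_S D` and the counit maps for `C` and `D`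
    (dTDD : OverR k (SV k) D D →ₗ[k] OverR k (SV k) D D)
    (hdTDD : ∀ (j : ℕ) (d d' : D), d ∈ RD.gr j →
      dTDD (omk k (SV k) d d') =
        omk k (SV k) (RD.d d) d' + (-1 : k) ^ j • omk k (SV k) d (RD.d d'))
    (rmuC : OverR k (MonoidAlgebra k (Gp p)) C C →ₗ[k] C)
    (hrmuC : ∀ c c' : C, rmuC (omk k (MonoidAlgebra k (Gp p)) c c') = op (RC.aug c') • c)
    (lmuD : OverR k (SV k) D D →ₗ[k] D)
    (hlmuD : ∀ d d' : D, lmuD (omk k (SV k) d d') = RD.aug d • d')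
    (rmuD : OverR k (SV k) D D →ₗ[k] D)
    (hrmuD : ∀ d d' : D, rmuD (omk k (SV k) d d') = op (RD.aug d') • d)
    -- the diagonal `Δ_C` of the reduced bar resolution
    (ΔC : C →ₗ[k] OverR k (MonoidAlgebra k (Gp p)) C C)
    (hΔC : ∀ (n : ℕ) (a : ℕ → Gp p),
      ΔC (RC.gen n a) = ∑ j ∈ Finset.range (n + 1),
        omk k (MonoidAlgebra k (Gp p)) (RC.gen j (fun t => if t ≤ j then a t else 1))
          (RC.gen (n - j) (fun t => if t = 0 then 1 else a (t + j))))
    -- the Koszul diagonal `Δ_D` (obtained from embedding into the bar resolution)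
    (ΔD : D →ₗ[k] OverR k (SV k) D D)
    (hΔD0 : ∀ s s' : SV k, ΔD (RD.gen0 s s') =
      omk k (SV k) (RD.gen0 s 1) (RD.gen0 1 s'))
    (hΔD1v : ∀ s s' : SV k, ΔD (RD.gen1v s s') =
      omk k (SV k) (RD.gen0 s 1) (RD.gen1v 1 s') +
      omk k (SV k) (RD.gen1v s 1) (RD.gen0 1 s'))
    (hΔD1w : ∀ s s' : SV k, ΔD (RD.gen1w s s') =
      omk k (SV k) (RD.gen0 s 1) (RD.gen1w 1 s') +
      omk k (SV k) (RD.gen1w s 1) (RD.gen0 1 s'))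
    (hΔD2 : ∀ s s' : SV k, ΔD (RD.gen2 s s') =
      omk k (SV k) (RD.gen0 s 1) (RD.gen2 1 s') +
      omk k (SV k) (RD.gen1v s 1) (RD.gen1w 1 s') -
      omk k (SV k) (RD.gen1w s 1) (RD.gen1v 1 s') +
      omk k (SV k) (RD.gen2 s 1) (RD.gen0 1 s'))
    -- the chain map `1 ⊗ τ ⊗ 1 : (C ⊗_{kG} C) ⊗ (D ⊗_S D) → X ⊗_A X`, where
    -- `τ(c ⊗ d) = (−1)^{ij} (ᵍd) ⊗ c` for `c ∈ (C_i)_g`, `d ∈ D_j` (a generator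
    -- `gen i' x'` of the reduced bar resolution has `G`-degree `∏ t, x' t`)
    (Θ : (OverR k (MonoidAlgebra k (Gp p)) C C) ⊗[k] (OverR k (SV k) D D) →ₗ[k]
      OverR k A (C ⊗[k] D) (C ⊗[k] D))
    (hΘ : ∀ (i i' j : ℕ) (x x' : ℕ → Gp p) (d d' : D), d ∈ RD.gr j →
      Θ ((omk k (MonoidAlgebra k (Gp p)) (RC.gen i x) (RC.gen i' x')) ⊗ₜ[k]
          (omk k (SV k) d d')) =
        (-1 : k) ^ (i' * j) •
          omk k A (RC.gen i x ⊗ₜ[k] ((∏ t ∈ Finset.range (i' + 2), x' t) • d))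
            (RC.gen i' x' ⊗ₜ[k] d'))
    -- the map `1 ⊗ τ⁻¹ ⊗ 1 : X ⊗_A X → (C ⊗_{kG} C) ⊗ (D ⊗_S D)`
    (tauInvQ : OverR k A (C ⊗[k] D) (C ⊗[k] D) →ₗ[k]
      (OverR k (MonoidAlgebra k (Gp p)) C C) ⊗[k] (OverR k (SV k) D D))
    (htauInvQ : ∀ (i i' j : ℕ) (x x' : ℕ → Gp p) (d d' : D), d ∈ RD.gr j →
      tauInvQ (omk k A (RC.gen i x ⊗ₜ[k] d) (RC.gen i' x' ⊗ₜ[k] d')) =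
        (-1 : k) ^ (i' * j) •
          ((omk k (MonoidAlgebra k (Gp p)) (RC.gen i x) (RC.gen i' x')) ⊗ₜ[k]
            (omk k (SV k) (((∏ t ∈ Finset.range (i' + 2), x' t)⁻¹ : Gp p) • d) d')))
    -- the bar-resolution homotopy `φ_C`
    (φC : OverR k (MonoidAlgebra k (Gp p)) C C →ₗ[k] C)
    (hφC : ∀ (i j : ℕ) (x y : ℕ → Gp p),
      φC (omk k (MonoidAlgebra k (Gp p)) (RC.gen i x) (RC.gen j y)) = (-1 : k) ^ i •
        RC.gen (i + j + 1) (fun t =>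
          if t ≤ i then x t
          else if t = i + 1 then x (i + 1) * y 0
          else y (t - i - 1)))
    -- the standard Koszul homotopy `φ_D` from `μ_D ⊗ 1` to `1 ⊗ μ_D`, with its
    -- values recorded in the paper
    (φD : OverR k (SV k) D D →ₗ[k] D)
    (hφD_gr : ∀ (i j : ℕ) (x y : D), x ∈ RD.gr i → y ∈ RD.gr j →
      φD (omk k (SV k) x y) ∈ RD.gr (i + j + 1))
    (hφD : RD.d ∘ₗ φD + φD ∘ₗ dTDD = lmuD - rmuD)
    (hφD₁ : φD (omk k (SV k) (RD.gen1w 1 1) (RD.gen0 (vv k) 1)) = RD.gen2 1 1)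
    (hφD₂ : φD (omk k (SV k) (RD.gen0 1 (vv k)) (RD.gen1w 1 1)) = 0)
    (hφD₃ : φD (omk k (SV k) (RD.gen0 1 1) (RD.gen1v 1 1)) = 0)
    (hφD₄ : φD (omk k (SV k) (RD.gen1v 1 1) (RD.gen0 1 1)) = 0)
    -- the reassociation `X ⊗_A (X ⊗_A X) → X ⊗_A X ⊗_A X` and `1_X ⊗ Δ_X` (so that
    -- `Δ_X^{(2)} = (1_X ⊗ Δ_X) Δ_X`, with `Δ_X = (1 ⊗ τ ⊗ 1)(Δ_C ⊗ Δ_D)`)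
    (ot2X : (C ⊗[k] D) →ₗ[k]
      OverR k A (C ⊗[k] D) (C ⊗[k] D) →ₗ[k] Over3 k A (C ⊗[k] D))
    (hot2X : ∀ x y z : C ⊗[k] D, ot2X x (omk k A y z) = omk3 k A x y z)
    (ΔRX : OverR k A (C ⊗[k] D) (C ⊗[k] D) →ₗ[k] Over3 k A (C ⊗[k] D))
    (hΔRX : ∀ x y : C ⊗[k] D,
      ΔRX (omk k A x y) = ot2X x ((Θ ∘ₗ TensorProduct.map ΔC ΔD) y))
    -- the map `1_X ⊗ λ ⊗ 1_X` (with its Koszul signs)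
    (Tlam : Over3 k A (C ⊗[k] D) →ₗ[k] OverR k A (C ⊗[k] D) (C ⊗[k] D))
    (hTlam : ∀ (i : ℕ) (x y z : C ⊗[k] D), x ∈ Xdeg k C D RC.gr RD.gr i →
      Tlam (omk3 k A x y z) =
        (-1 : k) ^ (i * 2) • omk k A x (lam y • z))
 :
    (lam ∘ₗ ((TensorProduct.map φC lmuD + TensorProduct.map (RC.eps ∘ₗ rmuC) φD) ∘ₗ tauInvQ) ∘ₗ Tlam ∘ₗ (ΔRX ∘ₗ (Θ ∘ₗ TensorProduct.map ΔC ΔD))) = 0 ∧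
    (lam ∘ₗ ((TensorProduct.map φC lmuD + TensorProduct.map (RC.eps ∘ₗ rmuC) φD) ∘ₗ tauInvQ) ∘ₗ Tlam ∘ₗ (ΔRX ∘ₗ (Θ ∘ₗ TensorProduct.map ΔC ΔD))) + (lam ∘ₗ ((TensorProduct.map φC lmuD + TensorProduct.map (RC.eps ∘ₗ rmuC) φD) ∘ₗ tauInvQ) ∘ₗ Tlam ∘ₗ (ΔRX ∘ₗ (Θ ∘ₗ TensorProduct.map ΔC ΔD))) = 0 := by
  have hm : (lam ∘ₗ ((TensorProduct.map φC lmuD + TensorProduct.map (RC.eps ∘ₗ rmuC) φD) ∘ₗ tauInvQ) ∘ₗ Tlam ∘ₗ (ΔRX ∘ₗ (Θ ∘ₗ TensorProduct.map ΔC ΔD))) = 0 :=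
    BLL.main ⟨RC, RD, hgv, ιS, ιG, hcomm, hactL, hactR, lam, hlamL, hlamR, hlam_supp,
      hlam_v, hlam_w, dTDD, hdTDD, rmuC, hrmuC, lmuD, hlmuD, rmuD, hrmuD, ΔC, hΔC, ΔD,
      hΔD0, hΔD1v, hΔD1w, hΔD2, Θ, hΘ, tauInvQ, htauInvQ, φC, hφC, φD, hφD_gr, hφD,
      ot2X, hot2X, ΔRX, hΔRX, Tlam, hTlam⟩
  exact ⟨hm, by rw [hm, add_zero]⟩

end
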